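/- Under the Bordawise metric, every election with m candidates and n voters lies on the diameter between ID and UN: d_Borda(E, ID) + d_Borda(E, UN) = d_Borda(ID, UN), where d_Borda(E,E') = emd(sort(B_E), sort(B_{E'})) for sorted Borda score vectors. -/

import Mathlib

/-- Earth mover's distance between vectors of equal sum: ℓ1-distance of prefix sums. -/
noncomputable def emd {m : ℕ} (x y : Fin m → ℝ) : ℝ :=
  ∑ t : Fin m, |(∑ k ∈ Finset.Iic t, x k) - (∑ k ∈ Finset.Iic t, y k)|

/-- Borda score vector of an election with votes `E i : Equiv.Perm (Fin m)` (the vote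
assigns each candidate its position, `0`-based): `B(c) = Σ_v (m − 1 − pos_v(c))`. -/
noncomputable def bordaVec {m n : ℕ} (E : Fin n → Equiv.Perm (Fin m)) : Fin m → ℝ :=
  fun c => ∑ v, ((m : ℝ) - 1 - ((E v c : ℕ) : ℝ))

open Finset

lemma sm_le {s : ℕ} (g : Fin s → ℕ) (hg : StrictMono g) : ∀ i : Fin s, (i : ℕ) ≤ g i := by
  intro i
  obtain ⟨iv, hiv⟩ := i
  induction iv with
  | zero => exact Nat.zero_le _
  | succ k ih =>
    have hk : k < s := Nat.lt_of_succ_lt hiv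
    have h1 : g ⟨k, hk⟩ < g ⟨k+1, hiv⟩ := hg (by simp [Fin.lt_def])
    have h2 := ih hk
    have e1 : ((⟨k, hk⟩ : Fin s) : ℕ) = k := rfl
    have e2 : ((⟨k+1, hiv⟩ : Fin s) : ℕ) = k+1 := rfl
    omega

lemma sum_ge_range (T : Finset ℕ) : ∑ i ∈ range T.card, i ≤ ∑ j ∈ T, j := by
  set k := T.card with hk
  have e : Fin k ≃o T := T.orderIsoOfFin hk.symm
  have hsum : ∑ j ∈ T, j = ∑ i : Fin k, ((e i : ℕ)) := by
    rw [← Finset.sum_attach T (fun j => j)]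
    exact (Equiv.sum_comp e.toEquiv (fun x => (x : ℕ))).symm
  have hmono : StrictMono (fun i : Fin k => ((e i : ℕ))) :=
    Subtype.strictMono_coe _ |>.comp e.strictMono
  rw [hsum, ← Fin.sum_univ_eq_sum_range (fun i => i) k]
  exact Finset.sum_le_sum fun i _ => sm_le _ hmono i

-- sum of an injection's values over Iic t dominates sum of Iic t itself
lemma inj_sum_le {m : ℕ} (g : Fin m → Fin m) (hg : Function.Injective g) (t : Fin m) :
    ∑ k ∈ Iic t, (k : ℕ) ≤ ∑ k ∈ Iic t, ((g k : ℕ)) := by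
  have hinj : Function.Injective (fun k : Fin m => ((g k : ℕ))) :=
    Fin.val_injective.comp hg
  have himg : ∑ k ∈ Iic t, ((g k : ℕ)) =
      ∑ j ∈ (Iic t).image (fun k => ((g k : ℕ))), j := by
    rw [Finset.sum_image (fun a _ b _ h => hinj h)]
  have hcard : ((Iic t).image (fun k => ((g k : ℕ)))).card = (t : ℕ) + 1 := by
    rw [Finset.card_image_of_injective _ hinj, Fin.card_Iic]
  have hlhs : ∑ k ∈ Iic t, (k : ℕ) = ∑ i ∈ range ((t : ℕ) + 1), i := by
    rw [show (range ((t : ℕ) + 1)) = Iic (t : ℕ) by ext j; simp [Nat.lt_succ_iff],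
      ← Fin.map_valEmbedding_Iic, Finset.sum_map]
    rfl
  rw [hlhs, himg, ← hcard]
  exact sum_ge_range _

lemma gauss (m : ℕ) (hm : 0 < m) : ∑ c : Fin m, ((c : ℕ) : ℝ) = m * (m - 1) / 2 := by
  rw [Fin.sum_univ_eq_sum_range (fun i => ((i : ℕ) : ℝ)) m]
  have h := Finset.sum_range_id_mul_two m
  have h' : ((∑ i ∈ range m, i : ℕ) : ℝ) * 2 = ((m * (m - 1) : ℕ) : ℝ) := by
    exact_mod_cast congrArg (fun z : ℕ => (z : ℝ)) h
  push_cast [Nat.cast_sub hm] at h'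
  linarith


/-- Under the Bordawise metric every election lies on the diameter between `ID` and `UN`:
`d_Borda(E, ID) + d_Borda(E, UN) = d_Borda(ID, UN)`, where the sorted Borda score vector
of `E` is given via a sorting permutation `σ`, the sorted Borda vector of `ID` is
`(n(m−1), n(m−2), ..., 0)` and that of `UN` is constantly `n(m−1)/2`. -/
theorem stmt10 (m n : ℕ) (hm : 0 < m) (hdvd : Nat.factorial m ∣ n)
    (E : Fin n → Equiv.Perm (Fin m))
    (σ : Equiv.Perm (Fin m)) (hσ : Antitone (fun c => bordaVec E (σ c))) :
    emd (fun c => bordaVec E (σ c))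
        (fun k : Fin m => (n : ℝ) * ((m : ℝ) - 1 - ((k : ℕ) : ℝ))) +
      emd (fun c => bordaVec E (σ c))
        (fun _ : Fin m => (n : ℝ) * ((m : ℝ) - 1) / 2) =
      emd (fun k : Fin m => (n : ℝ) * ((m : ℝ) - 1 - ((k : ℕ) : ℝ)))
        (fun _ : Fin m => (n : ℝ) * ((m : ℝ) - 1) / 2) := by
  set x : Fin m → ℝ := fun c => bordaVec E (σ c) with hx
  set cUN : ℝ := (n : ℝ) * ((m : ℝ) - 1) / 2 with hcUN
  -- total sum of x is m * cUN
  have htot : ∑ k : Fin m, x k = m * cUN := by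
    have h1 : ∑ k : Fin m, x k = ∑ c : Fin m, bordaVec E c :=
      Equiv.sum_comp σ (bordaVec E)
    rw [h1]
    unfold bordaVec
    rw [Finset.sum_comm]
    have h2 : ∀ v : Fin n, ∑ c : Fin m, ((m : ℝ) - 1 - ((E v c : ℕ) : ℝ))
        = (m : ℝ) * ((m : ℝ) - 1) / 2 := by
      intro v
      have h3 : ∑ c : Fin m, (((E v c : Fin m) : ℕ) : ℝ) = ∑ c : Fin m, ((c : ℕ) : ℝ) :=
        Equiv.sum_comp (E v) (fun c : Fin m => ((c : ℕ) : ℝ))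
      rw [Finset.sum_sub_distrib, h3, gauss m hm]
      simp [Finset.sum_const, Finset.card_univ]
      ring
    rw [Finset.sum_congr rfl (fun v _ => h2 v)]
    simp [Finset.sum_const, Finset.card_univ, hcUN]
    ring
  -- prefix upper bound vs ID
  have hub : ∀ t : Fin m, ∑ k ∈ Iic t, x k ≤
      ∑ k ∈ Iic t, (n : ℝ) * ((m : ℝ) - 1 - ((k : ℕ) : ℝ)) := by
    intro t
    have hrw : ∀ k : Fin m, (n : ℝ) * ((m : ℝ) - 1 - ((k : ℕ) : ℝ))
        = ∑ _v : Fin n, ((m : ℝ) - 1 - ((k : ℕ) : ℝ)) := by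
      intro k; simp [Finset.sum_const, Finset.card_univ]; ring
    simp only [hx, bordaVec, hrw]
    rw [Finset.sum_comm, Finset.sum_comm (s := Iic t)]
    apply Finset.sum_le_sum
    intro v _
    have key := inj_sum_le (fun k => E v (σ k))
      ((E v).injective.comp σ.injective) t
    have hkey : ∑ k ∈ Iic t, ((k : ℕ) : ℝ) ≤ ∑ k ∈ Iic t, (((E v (σ k) : Fin m) : ℕ) : ℝ) := by
      exact_mod_cast key
    have expand : ∀ f : Fin m → ℝ, ∑ k ∈ Iic t, ((m : ℝ) - 1 - f k)
        = (#(Iic t) : ℝ) * ((m : ℝ) - 1) - ∑ k ∈ Iic t, f k := by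
      intro f
      rw [Finset.sum_sub_distrib]
      simp [Finset.sum_const, mul_comm]
      ring
    rw [expand (fun k => (((E v (σ k) : Fin m) : ℕ) : ℝ)), expand (fun k => ((k : ℕ) : ℝ))]
    linarith
  -- prefix lower bound vs UN
  have hlb : ∀ t : Fin m, ((t : ℕ) + 1 : ℝ) * cUN ≤ ∑ k ∈ Iic t, x k := by
    intro t
    have hA : ((t : ℕ) + 1 : ℝ) * x t ≤ ∑ k ∈ Iic t, x k := by
      have := Finset.card_nsmul_le_sum (Iic t) x (x t)
        (fun k hk => hσ (Finset.mem_Iic.mp hk))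
      simpa [Fin.card_Iic, nsmul_eq_mul] using this
    have hB : ∑ k ∈ (Iic t)ᶜ, x k ≤ ((m : ℝ) - ((t : ℕ) + 1)) * x t := by
      have hle : ∀ k ∈ (Iic t)ᶜ, x k ≤ x t := by
        intro k hk
        have : ¬ k ≤ t := by simpa using hk
        exact hσ (le_of_not_ge this)
      have := Finset.sum_le_card_nsmul ((Iic t)ᶜ) x (x t) hle
      have hcard : (((Iic t)ᶜ : Finset (Fin m)).card : ℝ) = (m : ℝ) - ((t : ℕ) + 1) := by
        rw [Finset.card_compl, Fin.card_Iic, Fintype.card_fin]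
        push_cast [Nat.cast_sub t.isLt]
        ring
      rw [nsmul_eq_mul, hcard] at this
      exact this
    have hsplit : ∑ k ∈ Iic t, x k + ∑ k ∈ (Iic t)ᶜ, x k = (m : ℝ) * cUN := by
      rw [Finset.sum_add_sum_compl]; exact htot
    have hp : (0 : ℝ) < ((t : ℕ) + 1 : ℝ) := by positivity
    have hmp : (0 : ℝ) ≤ (m : ℝ) - ((t : ℕ) + 1) := by
      have ht := t.isLt
      have : ((t : ℕ) : ℝ) + 1 ≤ (m : ℝ) := by exact_mod_cast ht
      linarith
    have hm' : (0 : ℝ) < (m : ℝ) := by exact_mod_cast hm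
    nlinarith [mul_nonneg hmp (sub_nonneg.mpr hA), mul_nonneg hp.le
      (sub_nonneg.mpr hB), hm']
  -- UN prefix value
  have hUN : ∀ t : Fin m, ∑ _k ∈ Iic t, cUN = ((t : ℕ) + 1 : ℝ) * cUN := by
    intro t; simp [Finset.sum_const, Fin.card_Iic]
  -- chain: UN ≤ x-prefix ≤ ID-prefix
  unfold emd
  rw [← Finset.sum_add_distrib]
  apply Finset.sum_congr rfl
  intro t _
  have h1 := hub t
  have h2 := hlb t
  have h3 := hUN t
  rw [abs_of_nonpos (by linarith), abs_of_nonneg (by linarith), abs_of_nonneg (by linarith)]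
  ring
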